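/- Let θ ∈ (0, π), θ ≠ π/2, and s = e^{iθ}. Define φ(z) = (-3sz² - s²z)/(3z² + 3zs + s²). Then there exists x₀ ∈ ℝ such that lim_{y→0⁺} Im φ(x₀ + iy) > 0. -/
import Mathlib


open Real Complex Filter

set_option maxHeartbeats 1000000

/-- for `θ ∈ (0,π)`, `θ ≠ π/2`, `s = e^{iθ}` and
`φ(z) = (-3sz² - s²z)/(3z² + 3zs + s²)`, there is a real point `x₀` at which the
boundary value of `Im φ` from the upper half-plane is strictly positive. -/
theorem stmt9 (θ : ℝ) (hθ0 : 0 < θ) (hθπ : θ < π) (hθ : θ ≠ π / 2)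
    (s : ℂ) (hs : s = Complex.exp (θ * Complex.I))
    (φ : ℂ → ℂ)
    (hφ : ∀ z : ℂ, φ z =
      (-3 * s * z ^ 2 - s ^ 2 * z) / (3 * z ^ 2 + 3 * z * s + s ^ 2)) :
    ∃ x₀ : ℝ, ∃ L : ℝ, 0 < L ∧
      Tendsto (fun y : ℝ => (φ (x₀ + y * Complex.I)).im)
        (nhdsWithin 0 (Set.Ioi 0)) (nhds L) := by
  have hπ : (0:ℝ) < π := Real.pi_pos
  have ht : 0 < Real.sin θ := Real.sin_pos_of_pos_of_lt_pi hθ0 hθπ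
  have hc : Real.cos θ ≠ 0 := by
    intro h
    rcases Real.cos_eq_zero_iff.mp h with ⟨n, hn⟩
    have h1 : (0:ℝ) < 2 * n + 1 := by
      by_contra h1
      push_neg at h1
      nlinarith [hθ0, hn]
    have h2 : (2 * (n:ℝ) + 1) < 2 := by
      by_contra h2
      push_neg at h2
      nlinarith [hθπ, hn]
    have hn0 : n = 0 := by
      have : (0:ℤ) < 2 * n + 1 := by exact_mod_cast h1
      have : (2 * n + 1 : ℤ) < 2 := by exact_mod_cast h2
      omega
    apply hθ
    rw [hn, hn0]
    push_cast
    ring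
  set c := Real.cos θ with hcdef
  set t := Real.sin θ with htdef
  have hct : c ^ 2 + t ^ 2 = 1 := by
    rw [hcdef, htdef]
    nlinarith [Real.sin_sq_add_cos_sq θ]
  have hs' : s = (c : ℂ) + t * Complex.I := by
    rw [hs, Complex.exp_mul_I]
    simp [hcdef, htdef, Complex.ofReal_cos, Complex.ofReal_sin]
  set x₀ : ℝ := -c / 3 with hx0
  set z₀ : ℂ := (x₀ : ℂ) with hz0
  set Nv : ℂ := -3 * s * z₀ ^ 2 - s ^ 2 * z₀ with hNv
  set Dv : ℂ := 3 * z₀ ^ 2 + 3 * z₀ * s + s ^ 2 with hDv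
  have hDre : Dv.re = 3 * x₀ ^ 2 + 3 * x₀ * c + c ^ 2 - t ^ 2 := by
    simp [hDv, hs', hz0, Complex.add_re, Complex.mul_re, Complex.mul_im, pow_two]
    ring
  have hDim : Dv.im = c * t := by
    simp [hDv, hs', hz0, Complex.add_im, Complex.mul_re, Complex.mul_im, pow_two]
    rw [hx0]; ring
  have hNre : Nv.re = -3 * x₀ ^ 2 * c - x₀ * (c ^ 2 - t ^ 2) := by
    simp [hNv, hs', hz0, Complex.sub_re, Complex.mul_re, Complex.mul_im, pow_two]
    ring
  have hNim : Nv.im = -3 * x₀ ^ 2 * t - x₀ * (2 * c * t) := by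
    simp [hNv, hs', hz0, Complex.sub_im, Complex.mul_re, Complex.mul_im, pow_two]
    ring
  have hD0 : Dv ≠ 0 := by
    intro h
    have : Dv.im = 0 := by rw [h]; rfl
    rw [hDim] at this
    exact hc (by nlinarith [ht])
  have hnormSq : 0 < Complex.normSq Dv := Complex.normSq_pos.mpr hD0
  have hLval : (Nv / Dv).im =
      (Nv.im * Dv.re - Nv.re * Dv.im) / Complex.normSq Dv := by
    rw [Complex.div_im]; ring
  have hnum : Nv.im * Dv.re - Nv.re * Dv.im = c ^ 4 * t / 9 := by
    rw [hNim, hNre, hDre, hDim, hx0]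
    ring
  have hLpos : 0 < (Nv / Dv).im := by
    rw [hLval, hnum]
    apply div_pos _ hnormSq
    have : c ^ 4 > 0 := by positivity
    positivity
  refine ⟨x₀, (Nv / Dv).im, hLpos, ?_⟩
  have hcont0 : Continuous (fun y : ℝ => ((x₀ : ℂ) + ↑y * Complex.I)) :=
    continuous_const.add (Complex.continuous_ofReal.mul continuous_const)
  have htend : Tendsto (fun y : ℝ => ((x₀ : ℂ) + ↑y * Complex.I)) (nhds 0) (nhds z₀) := by
    have h := hcont0.tendsto 0
    simpa [hz0] using h
  have htN : Tendsto (fun y : ℝ => -3 * s * ((x₀ : ℂ) + ↑y * Complex.I) ^ 2 -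
      s ^ 2 * ((x₀ : ℂ) + ↑y * Complex.I)) (nhds 0) (nhds Nv) := by
    rw [hNv]
    exact (tendsto_const_nhds.mul (htend.pow 2)).sub (tendsto_const_nhds.mul htend)
  have htD : Tendsto (fun y : ℝ => 3 * ((x₀ : ℂ) + ↑y * Complex.I) ^ 2 +
      3 * ((x₀ : ℂ) + ↑y * Complex.I) * s + s ^ 2) (nhds 0) (nhds Dv) := by
    rw [hDv]
    exact ((tendsto_const_nhds.mul (htend.pow 2)).add
      ((tendsto_const_nhds.mul htend).mul tendsto_const_nhds)).add tendsto_const_nhds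
  have hdiv := htN.div htD hD0
  have hfin : Tendsto (fun y : ℝ => (φ ((x₀ : ℂ) + ↑y * Complex.I)).im) (nhds 0)
      (nhds ((Nv / Dv).im)) := by
    have h := (Complex.continuous_im.tendsto _).comp hdiv
    refine h.congr ?_
    intro y
    simp only [Function.comp, hφ, Pi.div_apply]
  exact hfin.mono_left nhdsWithin_le_nhds
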